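/- For a Poisson variate Q with mean μ > 0 and integer n ≥ 1, the alternating forward difference Σ_{a=0}^n C(n,a)(-1)^a q(a), with q(0) = E^+[1/Q] and q(a) = E[1/(Q+a)] for a ≥ 1, equals e^{-μ} Er(μ) + Σ_{l=1}^n (e^{-μ} C(n,l) - 1) (l-1)!/μ^l, where Er(μ) = Σ_{k=1}^∞ μ^k/(k·k!). -/

import Mathlib

open Finset

open Finset

lemma R0 (m : ℕ) (hm : m ≠ 0) :
    ∑ i ∈ range (m + 1), (-1 : ℝ) ^ i * (m.choose i : ℝ) = 0 := by
  have h := Int.alternating_sum_range_choose_of_ne hm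
  have h2 := congrArg (Int.cast : ℤ → ℝ) h
  push_cast at h2
  convert h2 using 2 with i

lemma L0 (j n : ℕ) (hjn : j < n) :
    ∑ b ∈ Icc j n, (-1 : ℝ) ^ b * (n.choose b : ℝ) * (b.choose j : ℝ) = 0 := by
  rw [← Finset.Ico_add_one_right_eq_Icc, Finset.sum_Ico_eq_sum_range]
  have h1 : n + 1 - j = (n - j) + 1 := by omega
  rw [h1]
  have h2 : ∀ i ∈ range (n - j + 1),
      (-1 : ℝ) ^ (j + i) * (n.choose (j + i) : ℝ) * ((j + i).choose j : ℝ)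
        = ((-1 : ℝ) ^ j * (n.choose j : ℝ)) * ((-1 : ℝ) ^ i * ((n - j).choose i : ℝ)) := by
    intro i hi
    simp only [mem_range] at hi
    have hle : j + i ≤ n := by omega
    have h := Nat.choose_mul (n := n) (Nat.le_add_right j i)
    have hcast := congrArg (Nat.cast : ℕ → ℝ) h
    push_cast at hcast
    have h3 : j + i - j = i := by omega
    rw [h3] at hcast
    rw [pow_add]
    linear_combination ((-1:ℝ)^j*(-1)^i) * hcast
  rw [Finset.sum_congr rfl h2, ← Finset.mul_sum, R0 (n - j) (by omega), mul_zero]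

lemma KEY (j n : ℕ) (hjn : j < n) :
    ∑ a ∈ Ico j n, (-1 : ℝ) ^ (a + 1) * ((n.choose (a + 1) : ℝ)) * ((a.choose j : ℝ))
      = (-1 : ℝ) ^ (j + 1) := by
  induction n, hjn using Nat.le_induction with
  | base =>
    rw [Nat.Ico_succ_singleton, Finset.sum_singleton]
    simp
  | succ n hn ih =>
    have hsplit : ∀ a ∈ Ico j (n + 1),
        (-1 : ℝ) ^ (a + 1) * ((n + 1).choose (a + 1) : ℝ) * (a.choose j : ℝ)
          = (-1 : ℝ) ^ (a + 1) * (n.choose (a + 1) : ℝ) * (a.choose j : ℝ)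
            + (-1) * ((-1 : ℝ) ^ a * (n.choose a : ℝ) * (a.choose j : ℝ)) := by
      intro a _
      rw [Nat.choose_succ_succ]
      push_cast
      ring
    rw [Finset.sum_congr rfl hsplit, Finset.sum_add_distrib, ← Finset.mul_sum]
    rw [Finset.Ico_add_one_right_eq_Icc, L0 j n hn, mul_zero, add_zero]
    rw [← Finset.Ico_add_one_right_eq_Icc]
    rw [Finset.sum_Ico_succ_top (by omega : j ≤ n)]
    rw [Nat.choose_succ_self, ih]
    simp

open Finset

lemma exp_tsum (μ : ℝ) : ∑' k : ℕ, μ ^ k / (k.factorial : ℝ) = Real.exp μ := by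
  rw [Real.exp_eq_exp_ℝ, NormedSpace.exp_eq_tsum_div]

lemma summable_exp_series (μ : ℝ) : Summable (fun k : ℕ => μ ^ k / (k.factorial : ℝ)) :=
  Real.summable_pow_div_factorial μ

lemma summable_S (μ : ℝ) (hμ : 0 < μ) (c : ℝ) (hc : 0 < c) :
    Summable (fun k : ℕ => μ ^ k / ((k.factorial : ℝ) * ((k : ℝ) + c))) := by
  refine Summable.of_nonneg_of_le (fun k => by positivity) (fun k => ?_) ((summable_exp_series μ).mul_right c⁻¹)
  · have h1 : μ ^ k / ((k.factorial : ℝ) * ((k : ℝ) + c)) = (μ ^ k / (k.factorial : ℝ)) * ((k:ℝ)+c)⁻¹ := by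
      field_simp
    rw [h1]
    gcongr
    linarith [Nat.cast_nonneg (α := ℝ) k]

lemma summable_g (μ : ℝ) (hμ : 0 < μ) (c : ℝ) (hc : 0 < c) :
    Summable (fun k : ℕ => μ ^ k * (k : ℝ) / ((k.factorial : ℝ) * ((k : ℝ) + c))) := by
  apply Summable.congr (f := fun k : ℕ =>
    μ ^ k / (k.factorial : ℝ) - c * (μ ^ k / ((k.factorial : ℝ) * ((k : ℝ) + c))))
  · exact (summable_exp_series μ).sub (((summable_S μ hμ c hc).mul_left c))
  · intro k
    have hk : (0:ℝ) < (k:ℝ) + c := by positivity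
    have hf : (0:ℝ) < (k.factorial : ℝ) := by positivity
    field_simp
    ring

lemma S_one (μ : ℝ) (hμ : 0 < μ) :
    ∑' k : ℕ, μ ^ k / ((k.factorial : ℝ) * ((k : ℝ) + 1)) = (Real.exp μ - 1) / μ := by
  have h1 : ∀ k : ℕ, μ ^ k / ((k.factorial : ℝ) * ((k : ℝ) + 1))
      = μ ^ k / ((k + 1).factorial : ℝ) := by
    intro k
    rw [Nat.factorial_succ]
    push_cast
    ring_nf
  rw [tsum_congr h1]
  have hs : Summable (fun k : ℕ => μ ^ k / (((k + 1).factorial : ℝ))) := by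
    apply Summable.congr (f := fun k : ℕ => μ ^ k / ((k.factorial : ℝ) * ((k : ℝ) + 1)))
    · exact summable_S μ hμ 1 one_pos
    · exact h1
  rw [eq_div_iff (ne_of_gt hμ), mul_comm, ← tsum_mul_left]
  have h2 : ∀ k : ℕ, μ * (μ ^ k / (((k + 1).factorial : ℝ))) = μ ^ (k+1) / ((k + 1).factorial : ℝ) := by
    intro k; rw [pow_succ]; ring
  rw [tsum_congr h2]
  have h3 := Summable.tsum_eq_zero_add (summable_exp_series μ)
  rw [exp_tsum] at h3
  simp only [pow_zero, Nat.factorial_zero, Nat.cast_one] at h3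
  linarith [h3]

lemma S_rec (μ : ℝ) (hμ : 0 < μ) (a : ℕ) :
    ∑' k : ℕ, μ ^ k / ((k.factorial : ℝ) * ((k : ℝ) + ((a:ℝ) + 2)))
      = (Real.exp μ - ((a:ℝ) + 1) * ∑' k : ℕ, μ ^ k / ((k.factorial : ℝ) * ((k : ℝ) + ((a:ℝ) + 1)))) / μ := by
  set g : ℕ → ℝ := fun j => μ ^ j * (j : ℝ) / ((j.factorial : ℝ) * ((j : ℝ) + ((a:ℝ) + 1))) with hg
  have hgsum : Summable g := summable_g μ hμ ((a:ℝ)+1) (by positivity)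
  have hterm : ∀ k : ℕ, μ * (μ ^ k / ((k.factorial : ℝ) * ((k : ℝ) + ((a:ℝ) + 2)))) = g (k + 1) := by
    intro k
    simp only [hg, Nat.factorial_succ]
    push_cast
    have hf : (0:ℝ) < (k.factorial : ℝ) := by positivity
    have h1 : (0:ℝ) < (k:ℝ) + ((a:ℝ)+2) := by positivity
    have h2 : (0:ℝ) < (k:ℝ) + 1 + ((a:ℝ)+1) := by positivity
    have h3 : (k:ℝ) + 1 + ((a:ℝ)+1) = (k:ℝ) + ((a:ℝ)+2) := by ring
    rw [h3]
    field_simp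
    ring
  have hgsplit : ∀ j : ℕ, g j = μ ^ j / (j.factorial : ℝ)
      - ((a:ℝ)+1) * (μ ^ j / ((j.factorial : ℝ) * ((j : ℝ) + ((a:ℝ) + 1)))) := by
    intro j
    have hk : (0:ℝ) < (j:ℝ) + ((a:ℝ)+1) := by positivity
    have hf : (0:ℝ) < (j.factorial : ℝ) := by positivity
    simp only [hg]
    field_simp
    ring
  rw [eq_div_iff (ne_of_gt hμ), mul_comm, ← tsum_mul_left, tsum_congr hterm]
  have h0 := Summable.tsum_eq_zero_add hgsum
  have hg0 : g 0 = 0 := by simp [hg]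
  rw [hg0, zero_add] at h0
  rw [← h0, tsum_congr hgsplit,
    Summable.tsum_sub (summable_exp_series μ) ((summable_S μ hμ _ (by positivity)).mul_left _),
    exp_tsum, tsum_mul_left]

lemma S_closed (μ : ℝ) (hμ : 0 < μ) (a : ℕ) :
    ∑' k : ℕ, μ ^ k / ((k.factorial : ℝ) * ((k : ℝ) + ((a : ℝ) + 1)))
      = (∑ j ∈ Finset.range (a + 1),
          (-1 : ℝ) ^ j * ((a.factorial : ℝ) / (((a - j).factorial : ℝ))) * Real.exp μ / μ ^ (j + 1))
        + (-1 : ℝ) ^ (a + 1) * (a.factorial : ℝ) / μ ^ (a + 1) := by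
  induction a with
  | zero =>
    simp only [Nat.cast_zero, zero_add, Finset.range_one, Finset.sum_singleton, pow_zero,
      Nat.zero_sub, Nat.factorial_zero, Nat.cast_one, pow_one]
    rw [S_one μ hμ]
    field_simp
    ring
  | succ a ih =>
    have hc : ((a + 1 : ℕ) : ℝ) + 1 = (a : ℝ) + 2 := by push_cast; ring
    simp only [hc]
    rw [Finset.sum_range_succ']
    rw [S_rec μ hμ a, ih]
    have hf0 : (-1 : ℝ) ^ 0 * (((a+1).factorial : ℝ) / (((a + 1 - 0).factorial : ℝ)))
        * Real.exp μ / μ ^ (0 + 1) = Real.exp μ / μ := by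
      have : ((a+1).factorial : ℝ) ≠ 0 := by positivity
      simp [div_self this]
    rw [hf0]
    have hterm : ∀ j ∈ Finset.range (a + 1),
        (-1 : ℝ) ^ (j + 1) * (((a+1).factorial : ℝ) / (((a + 1 - (j + 1)).factorial : ℝ)))
            * Real.exp μ / μ ^ (j + 1 + 1)
          = -((((a : ℝ) + 1) *
              ((-1 : ℝ) ^ j * ((a.factorial : ℝ) / (((a - j).factorial : ℝ)))
                * Real.exp μ / μ ^ (j + 1))) / μ) := by
      intro j hj
      have h1 : a + 1 - (j + 1) = a - j := by omega
      rw [h1, Nat.factorial_succ]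
      push_cast
      have hb : ((a - j).factorial : ℝ) ≠ 0 := by positivity
      field_simp
      ring
    rw [Finset.sum_congr rfl hterm]
    simp only [neg_div, Finset.sum_neg_distrib]
    rw [Nat.factorial_succ]
    push_cast
    have hb : ((a.factorial : ℝ)) ≠ 0 := by positivity
    simp only [← Finset.sum_div]
    rw [← Finset.mul_sum]
    field_simp
    ring

/-- The alternating forward difference of the sequence of shifted first inverse moments
of a Poisson variate:
`Σ_{a=0}^n C(n,a)(-1)^a q(a) = e^{-μ} Er(μ) + Σ_{l=1}^n (e^{-μ} C(n,l) - 1)(l-1)!/μ^l`,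
where `q(0) = E^+[1/Q]`, `q(a) = E[1/(Q+a)]` and `Er(μ) = Σ_{k≥1} μ^k/(k·k!)`. -/
theorem poisson_difference_first_inv_moment (μ : ℝ) (hμ : 0 < μ) (n : ℕ) (hn : 1 ≤ n) :
    ∑ a ∈ Finset.range (n + 1), (n.choose a : ℝ) * (-1) ^ a *
        (if a = 0 then
          ∑' k : ℕ, Real.exp (-μ) * μ ^ (k + 1) / (((k + 1).factorial : ℝ) * ((k : ℝ) + 1))
         else
          ∑' k : ℕ, Real.exp (-μ) * μ ^ k / ((k.factorial : ℝ) * ((k : ℝ) + (a : ℝ)))) =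
      Real.exp (-μ) * (∑' k : ℕ, μ ^ (k + 1) / (((k : ℝ) + 1) * ((k + 1).factorial : ℝ))) +
        ∑ l ∈ Finset.Icc 1 n,
          (Real.exp (-μ) * (n.choose l : ℝ) - 1) * ((l - 1).factorial : ℝ) / μ ^ l := by
  have hexp : Real.exp (-μ) * Real.exp μ = 1 := by rw [← Real.exp_add]; simp
  set E := Real.exp (-μ) with hE
  have hsq : ∀ m : ℕ, ((-1 : ℝ)) ^ m * (-1) ^ m = 1 := by
    intro m; rw [← mul_pow]; norm_num
  -- the a = 0 term
  have h0 : (∑' k : ℕ, E * μ ^ (k + 1) / (((k + 1).factorial : ℝ) * ((k : ℝ) + 1)))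
      = E * (∑' k : ℕ, μ ^ (k + 1) / (((k : ℝ) + 1) * ((k + 1).factorial : ℝ))) := by
    rw [← tsum_mul_left]
    exact tsum_congr fun k => by ring
  -- closed form for the shifted inverse moments
  have hq : ∀ i : ℕ, (∑' k : ℕ, E * μ ^ k / ((k.factorial : ℝ) * ((k : ℝ) + ((i : ℝ) + 1))))
      = (∑ j ∈ Finset.range (i + 1),
          (-1 : ℝ) ^ j * ((i.factorial : ℝ) / (((i - j).factorial : ℝ))) / μ ^ (j + 1))
        + (-1 : ℝ) ^ (i + 1) * (i.factorial : ℝ) * E / μ ^ (i + 1) := by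
    intro i
    have h1 : (∑' k : ℕ, E * μ ^ k / ((k.factorial : ℝ) * ((k : ℝ) + ((i : ℝ) + 1))))
        = E * ∑' k : ℕ, μ ^ k / ((k.factorial : ℝ) * ((k : ℝ) + ((i : ℝ) + 1))) := by
      rw [← tsum_mul_left]
      exact tsum_congr fun k => by ring
    rw [h1, S_closed μ hμ i, mul_add, Finset.mul_sum]
    congr 1
    · refine Finset.sum_congr rfl fun j hj => ?_
      linear_combination ((-1 : ℝ) ^ j * ((i.factorial : ℝ) / (((i - j).factorial : ℝ))) / μ ^ (j + 1)) * hexp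
    · ring
  rw [Finset.sum_range_succ']
  have hIcc : ∑ l ∈ Finset.Icc 1 n, (E * (n.choose l : ℝ) - 1) * ((l - 1).factorial : ℝ) / μ ^ l
      = ∑ i ∈ Finset.range n, (E * (n.choose (i + 1) : ℝ) - 1) * (i.factorial : ℝ) / μ ^ (i + 1) := by
    rw [← Finset.Ico_add_one_right_eq_Icc, Finset.sum_Ico_eq_sum_range]
    refine Finset.sum_congr rfl fun i hi => ?_
    have h1 : 1 + i = i + 1 := by omega
    rw [h1]
    norm_num
  rw [hIcc]
  -- reduce the a = 0 term
  have hzero : (n.choose 0 : ℝ) * (-1) ^ 0 *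
      (if (0 : ℕ) = 0 then
        ∑' k : ℕ, E * μ ^ (k + 1) / (((k + 1).factorial : ℝ) * ((k : ℝ) + 1))
       else
        ∑' k : ℕ, E * μ ^ k / ((k.factorial : ℝ) * ((k : ℝ) + ((0 : ℕ) : ℝ))))
      = E * (∑' k : ℕ, μ ^ (k + 1) / (((k : ℝ) + 1) * ((k + 1).factorial : ℝ))) := by
    rw [if_pos rfl, h0]
    simp
  rw [hzero]
  -- rewrite the remaining terms using hq
  have hterms : ∀ i ∈ Finset.range n,
      (n.choose (i + 1) : ℝ) * (-1) ^ (i + 1) *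
        (if i + 1 = 0 then
          ∑' k : ℕ, E * μ ^ (k + 1) / (((k + 1).factorial : ℝ) * ((k : ℝ) + 1))
         else
          ∑' k : ℕ, E * μ ^ k / ((k.factorial : ℝ) * ((k : ℝ) + ((i + 1 : ℕ) : ℝ))))
      = (n.choose (i + 1) : ℝ) * (-1) ^ (i + 1) *
          ((∑ j ∈ Finset.range (i + 1),
            (-1 : ℝ) ^ j * ((i.factorial : ℝ) / (((i - j).factorial : ℝ))) / μ ^ (j + 1)))
        + E * (n.choose (i + 1) : ℝ) * (i.factorial : ℝ) / μ ^ (i + 1) := by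
    intro i hi
    rw [if_neg (Nat.succ_ne_zero i)]
    have hc : (∑' k : ℕ, E * μ ^ k / ((k.factorial : ℝ) * ((k : ℝ) + ((i + 1 : ℕ) : ℝ))))
        = ∑' k : ℕ, E * μ ^ k / ((k.factorial : ℝ) * ((k : ℝ) + ((i : ℝ) + 1))) := by
      push_cast
      rfl
    rw [hc, hq i, mul_add]
    congr 1
    linear_combination ((n.choose (i + 1) : ℝ) * (i.factorial : ℝ) * E / μ ^ (i + 1)) * hsq (i + 1)
  rw [Finset.sum_congr rfl hterms, Finset.sum_add_distrib]
  -- the key combinatorial evaluation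
  have hmain : ∑ i ∈ Finset.range n, (n.choose (i + 1) : ℝ) * (-1) ^ (i + 1) *
      (∑ j ∈ Finset.range (i + 1),
        (-1 : ℝ) ^ j * ((i.factorial : ℝ) / (((i - j).factorial : ℝ))) / μ ^ (j + 1))
      = ∑ i ∈ Finset.range n, (-(i.factorial : ℝ)) / μ ^ (i + 1) := by
    simp only [Finset.mul_sum]
    rw [Finset.sum_comm' (t' := Finset.range n) (s' := fun j => Finset.Ico j n) (by
      intro x y
      simp only [Finset.mem_range, Finset.mem_Ico]
      omega)]
    refine Finset.sum_congr rfl fun j hj => ?_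
    simp only [Finset.mem_range] at hj
    have hfact : ∀ i ∈ Finset.Ico j n,
        (n.choose (i + 1) : ℝ) * (-1) ^ (i + 1) *
          ((-1 : ℝ) ^ j * ((i.factorial : ℝ) / (((i - j).factorial : ℝ))) / μ ^ (j + 1))
        = ((-1 : ℝ) ^ j * (j.factorial : ℝ) / μ ^ (j + 1)) *
            ((-1 : ℝ) ^ (i + 1) * (n.choose (i + 1) : ℝ) * (i.choose j : ℝ)) := by
      intro i hi
      simp only [Finset.mem_Ico] at hi
      have hji : j ≤ i := hi.1
      have hcf := Nat.choose_mul_factorial_mul_factorial hji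
      have hcast := congrArg (Nat.cast : ℕ → ℝ) hcf
      push_cast at hcast
      have hne : ((i - j).factorial : ℝ) ≠ 0 := by positivity
      have hdiv : (i.factorial : ℝ) / ((i - j).factorial : ℝ)
          = (j.factorial : ℝ) * (i.choose j : ℝ) := by
        rw [div_eq_iff hne]
        linear_combination -hcast
      rw [hdiv]
      ring
    rw [Finset.sum_congr rfl hfact, ← Finset.mul_sum, KEY j n hj]
    have h2 : ((-1 : ℝ)) ^ j * (-1) ^ (j + 1) = -1 := by
      rw [pow_succ, show ((-1:ℝ))^j * ((-1)^j * -1) = ((-1)^j * (-1)^j) * -1 from by ring,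
        hsq j]
      norm_num
    linear_combination ((j.factorial : ℝ) / μ ^ (j + 1)) * h2
  rw [hmain, ← Finset.sum_add_distrib, add_comm]
  congr 1
  exact Finset.sum_congr rfl fun i _ => by ring
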